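/- Let X(Γ) be the universal cover of the Salvetti complex of G(Γ). Let K ⊂ X(Γ) be a standard subcomplex and define Δ(K) ⊂ 𝒫(Γ) to be the union of Δ(F) over all standard flats F ⊂ K. If a vertex v ∈ 𝒫(Γ) does not lie in Δ(K), then the 0-skeleton of K is contained in a single v-level. -/

import Mathlib

/-! A model of the right-angled Artin group `G(Γ)` and of the vertex set of the
universal cover `X(Γ)` of its Salvetti complex: the group is the presented group
with commutator relations from `Γ`, and the `0`-skeleton of `X(Γ)` is identified
with `G(Γ)`, with the `1`-skeleton given by the Cayley graph. -/

/-- The commutator relators of the right-angled Artin group on `Γ`. -/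
def raagRels {ι : Type} (Γ : SimpleGraph ι) : Set (FreeGroup ι) :=
  {r | ∃ i j : ι, Γ.Adj i j ∧
    r = FreeGroup.of i * FreeGroup.of j * (FreeGroup.of i)⁻¹ * (FreeGroup.of j)⁻¹}

/-- The right-angled Artin group `G(Γ)`. -/
abbrev Raag {ι : Type} (Γ : SimpleGraph ι) := PresentedGroup (raagRels Γ)

/-- The standard generator of `G(Γ)` corresponding to a vertex of `Γ`. -/
def rgen {ι : Type} (Γ : SimpleGraph ι) (i : ι) : Raag Γ := PresentedGroup.of i

/-- The Cayley graph of `G(Γ)` w.r.t. the standard generators: the 1-skeleton of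
`X(Γ)`, with vertex set identified with `G(Γ)`. -/
def cayley {ι : Type} (Γ : SimpleGraph ι) : SimpleGraph (Raag Γ) where
  Adj g h := g ≠ h ∧ ∃ i : ι, h = g * rgen Γ i ∨ g = h * rgen Γ i
  symm := ⟨by rintro g h ⟨hne, i, hi⟩; exact ⟨hne.symm, i, hi.symm⟩⟩
  loopless := ⟨by rintro g ⟨hne, _⟩; exact hne rfl⟩

/-- The distance from a vertex to a set of vertices (in the graph metric, i.e.
the word metric). -/
noncomputable def setDistN {V : Type} (G : SimpleGraph V) (x : V) (B : Set V) : ℕ :=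
  sInf ((fun b => G.dist x b) '' B)

/-- Two nonempty subsets are parallel: the distance to one is constant on the
other, and vice versa (with a common constant). -/
def ParSets {V : Type} (G : SimpleGraph V) (A B : Set V) : Prop :=
  A.Nonempty ∧ B.Nonempty ∧ ∃ c : ℕ,
    (∀ a ∈ A, setDistN G a B = c) ∧ (∀ b ∈ B, setDistN G b A = c)

/-- `m` is the unique nearest point of `A` to `z` (the nearest-point projection
of `z` onto `A`). -/
def NearestPt {V : Type} (G : SimpleGraph V) (A : Set V) (z m : V) : Prop :=
  m ∈ A ∧ ∀ w ∈ A, w ≠ m → G.dist z m < G.dist z w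

/-- The (vertex set of the) standard geodesic through `g` in the direction of the
generator `i`. -/
def stdGeod {ι : Type} (Γ : SimpleGraph ι) (g : Raag Γ) (i : ι) : Set (Raag Γ) :=
  {h | ∃ n : ℤ, h = g * rgen Γ i ^ n}

/-- `A` is (the vertex set of) a standard geodesic of `X(Γ)`. -/
def IsStdGeod {ι : Type} (Γ : SimpleGraph ι) (A : Set (Raag Γ)) : Prop :=
  ∃ (g : Raag Γ) (i : ι), A = stdGeod Γ g i

/-- The standard geodesics `A` and `B` span a standard 2-flat. -/
def Span2 {ι : Type} (Γ : SimpleGraph ι) (A B : Set (Raag Γ)) : Prop :=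
  ∃ (g : Raag Γ) (i j : ι), Γ.Adj i j ∧ A = stdGeod Γ g i ∧ B = stdGeod Γ g j

/-- The vertices `Δ(A)`, `Δ(B)` of the extension complex `𝒫(Γ)` determined by
the standard geodesics `A`, `B` are adjacent: some parallel representatives span
a standard 2-flat. -/
def ClassAdj {ι : Type} (Γ : SimpleGraph ι) (A B : Set (Raag Γ)) : Prop :=
  ∃ A' B' : Set (Raag Γ), IsStdGeod Γ A' ∧ IsStdGeod Γ B' ∧
    ParSets (cayley Γ) A A' ∧ ParSets (cayley Γ) B B' ∧
    (Span2 Γ A' B' ∨ Span2 Γ B' A')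

/-- `F` is (the 0-skeleton of) a standard flat of `X(Γ)`: a coset of the standard
abelian subgroup generated by a finite clique of `Γ`. -/
def IsStdFlat {ι : Type} (Γ : SimpleGraph ι) (F : Set (Raag Γ)) : Prop :=
  ∃ (g : Raag Γ) (S : Set ι), S.Finite ∧ S.Pairwise Γ.Adj ∧
    F = (fun x => g * x) '' (Subgroup.closure (rgen Γ '' S) : Set (Raag Γ))

/-- The `Δ(l)`-level of height `x`: the set of vertices whose nearest-point
projection onto the standard geodesic `l` is `x`. -/
def levelSet {ι : Type} (Γ : SimpleGraph ι) (l : Set (Raag Γ)) (x : Raag Γ) :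
    Set (Raag Γ) :=
  {z | NearestPt (cayley Γ) l z x}

/-! ### Auxiliary development: normal forms in RAAGs via the trace-monoid action -/

namespace RaagAux

variable {ι : Type} (Γ : SimpleGraph ι)

/-- A letter: a generator together with a sign. -/
abbrev Ltr (ι : Type) := ι × Bool

/-- Inverse letter. -/
def linv (x : Ltr ι) : Ltr ι := (x.1, !x.2)

@[simp] lemma linv_linv (x : Ltr ι) : linv (linv x) = x := by
  cases x; simp [linv]

@[simp] lemma linv_fst (x : Ltr ι) : (linv x).1 = x.1 := rfl

/-- Two letters commute. -/
def lcomm (x y : Ltr ι) : Prop := Γ.Adj x.1 y.1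

lemma lcomm_symm {x y : Ltr ι} (h : lcomm Γ x y) : lcomm Γ y x := h.symm

@[simp] lemma lcomm_linv_left {x y : Ltr ι} : lcomm Γ (linv x) y ↔ lcomm Γ x y := Iff.rfl

@[simp] lemma lcomm_linv_right {x y : Ltr ι} : lcomm Γ x (linv y) ↔ lcomm Γ x y := Iff.rfl

lemma lcomm_irrefl (x : Ltr ι) : ¬ lcomm Γ x x := Γ.loopless.irrefl x.1

lemma lcomm_ne_fst {x y : Ltr ι} (h : lcomm Γ x y) : x.1 ≠ y.1 := Γ.ne_of_adj h

/-- Elementary swap of two adjacent commuting letters. -/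
def Sw (w w' : List (Ltr ι)) : Prop :=
  ∃ p x y s, lcomm Γ x y ∧ w = p ++ x :: y :: s ∧ w' = p ++ y :: x :: s

lemma Sw.symm' {w w' : List (Ltr ι)} (h : Sw Γ w w') : Sw Γ w' w := by
  obtain ⟨p, x, y, s, hc, h1, h2⟩ := h
  exact ⟨p, y, x, s, lcomm_symm Γ hc, h2, h1⟩

/-- Shuffle equivalence: reflexive-transitive closure of swaps. -/
def Star (w w' : List (Ltr ι)) : Prop := Relation.ReflTransGen (Sw Γ) w w'

lemma Star.refl' (w : List (Ltr ι)) : Star Γ w w := Relation.ReflTransGen.refl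

lemma Star.symm' {w w' : List (Ltr ι)} (h : Star Γ w w') : Star Γ w' w :=
  haveI : Std.Symm (Sw Γ) := ⟨fun _ _ hs => hs.symm'⟩
  Std.Symm.symm (r := Relation.ReflTransGen (Sw Γ)) _ _ h

lemma Star.trans' {a b c : List (Ltr ι)} (h : Star Γ a b) (h' : Star Γ b c) : Star Γ a c :=
  Relation.ReflTransGen.trans h h'

lemma star_cons {w w' : List (Ltr ι)} (c : Ltr ι) (h : Star Γ w w') :
    Star Γ (c :: w) (c :: w') := by
  refine Relation.ReflTransGen.lift (fun l => c :: l) ?_ _ _ h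
  rintro a b ⟨p, x, y, s, hc, h1, h2⟩
  exact ⟨c :: p, x, y, s, hc, by simp [h1], by simp [h2]⟩

lemma star_append_left (p : List (Ltr ι)) {w w' : List (Ltr ι)} (h : Star Γ w w') :
    Star Γ (p ++ w) (p ++ w') := by
  induction p with
  | nil => simpa using h
  | cons c q ih => simpa using star_cons Γ c ih

lemma star_append_right {w w' : List (Ltr ι)} (s : List (Ltr ι)) (h : Star Γ w w') :
    Star Γ (w ++ s) (w' ++ s) := by
  refine Relation.ReflTransGen.lift (fun l => l ++ s) ?_ _ _ h
  rintro a b ⟨p, x, y, t, hc, h1, h2⟩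
  exact ⟨p, x, y, t ++ s, hc, by simp [h1], by simp [h2]⟩

lemma Star.length_eq {w w' : List (Ltr ι)} (h : Star Γ w w') : w.length = w'.length := by
  induction h with
  | refl => rfl
  | tail _ hs ih =>
      obtain ⟨p, x, y, s, _, h1, h2⟩ := hs
      rw [ih, h1, h2]; simp

/-- Move a letter commuting with a prefix to the front. -/
lemma star_move {q : List (Ltr ι)} {a : Ltr ι} (r : List (Ltr ι))
    (h : ∀ y ∈ q, lcomm Γ a y) :
    Star Γ (q ++ a :: r) (a :: (q ++ r)) := by
  induction q with
  | nil => exact Star.refl' Γ _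
  | cons b q ih =>
      have h1 : Star Γ (b :: (q ++ a :: r)) (b :: a :: (q ++ r)) :=
        star_cons Γ b (ih (fun y hy => h y (List.mem_cons_of_mem _ hy)))
      have h2 : Sw Γ (b :: a :: (q ++ r)) (a :: b :: (q ++ r)) :=
        ⟨[], b, a, q ++ r, lcomm_symm Γ (h b List.mem_cons_self), rfl, rfl⟩
      exact (h1.trans' Γ (Relation.ReflTransGen.single h2))

/-- Move a letter commuting with a suffix to the back. -/
lemma star_move_back {t : List (Ltr ι)} {b : Ltr ι} (s : List (Ltr ι))
    (h : ∀ y ∈ t, lcomm Γ b y) :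
    Star Γ (s ++ b :: t) (s ++ t ++ [b]) := by
  induction t generalizing s with
  | nil => simp [Star.refl']
  | cons c t ih =>
      have h1 : Sw Γ (s ++ b :: c :: t) (s ++ c :: b :: t) :=
        ⟨s, b, c, t, h c List.mem_cons_self, rfl, rfl⟩
      have h2 : Star Γ ((s ++ [c]) ++ b :: t) ((s ++ [c]) ++ t ++ [b]) :=
        ih (fun y hy => h y (List.mem_cons_of_mem _ hy)) (s := s ++ [c])
      refine Star.trans' Γ (Relation.ReflTransGen.single h1) ?_
      simpa using h2

end RaagAux
namespace RaagAux

variable {ι : Type} (Γ : SimpleGraph ι)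

/-- The extraction lemma: shuffles track a front letter. -/
lemma ext1 {x : Ltr ι} {w u : List (Ltr ι)} (h : Star Γ (x :: w) u) :
    ∃ q r, u = q ++ x :: r ∧ (∀ y ∈ q, lcomm Γ x y) ∧ Star Γ w (q ++ r) := by
  induction h with
  | refl => exact ⟨[], w, rfl, by simp, Star.refl' Γ w⟩
  | tail _ hs ih =>
      obtain ⟨q, r, rfl, hq, hw⟩ := ih
      obtain ⟨p, c, d, s, hc, h1, h2⟩ := hs
      rcases List.append_eq_append_iff.1 h1 with ⟨a', ha1, ha2⟩ | ⟨c', hc1, hc2⟩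
      · -- p = q ++ a', x :: r = a' ++ c :: d :: s
        cases a' with
        | nil =>
            simp only [List.nil_append] at ha2
            obtain ⟨rfl, rfl⟩ : x = c ∧ r = d :: s := by
              cases ha2; exact ⟨rfl, rfl⟩
            subst ha1
            refine ⟨q ++ [d], s, by simp [h2], ?_, ?_⟩
            · intro y hy
              rcases List.mem_append.1 hy with hy | hy
              · exact hq y hy
              · simp at hy; subst hy; exact hc
            · simpa using hw
        | cons e a'' =>
            obtain ⟨rfl, rfl⟩ : x = e ∧ r = a'' ++ c :: d :: s := by
              cases ha2; exact ⟨rfl, rfl⟩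
            subst ha1
            refine ⟨q, a'' ++ d :: c :: s, by simp [h2], hq, ?_⟩
            refine hw.trans' Γ (Relation.ReflTransGen.single ?_)
            exact ⟨q ++ a'', c, d, s, hc, by simp, by simp⟩
      · -- q = p ++ c', c' ++ x :: r = c :: d :: s
        cases c' with
        | nil =>
            simp only [List.nil_append] at hc2
            simp only [List.append_nil] at hc1
            subst hc1
            obtain ⟨rfl, rfl⟩ : x = c ∧ r = d :: s := by
              cases hc2; exact ⟨rfl, rfl⟩
            refine ⟨q ++ [d], s, by simp [h2], ?_, ?_⟩
            · intro y hy
              rcases List.mem_append.1 hy with hy | hy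
              · exact hq y hy
              · simp at hy; subst hy; exact hc
            · simpa using hw
        | cons e c'' =>
            cases c'' with
            | nil =>
                simp only [List.cons_append, List.nil_append] at hc2
                cases hc2
                subst hc1
                refine ⟨p, c :: r, by simp [h2], ?_, ?_⟩
                · intro y hy
                  exact hq y (List.mem_append_left _ hy)
                · have heq : p ++ [c] ++ r = p ++ c :: r := by simp
                  rw [heq] at hw
                  exact hw
            | cons f c₃ =>
                simp only [List.cons_append] at hc2
                cases hc2
                subst hc1
                refine ⟨p ++ d :: c :: c₃, r, by simp [h2], ?_, ?_⟩
                · intro y hy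
                  apply hq y
                  simp only [List.mem_append, List.mem_cons] at hy ⊢
                  tauto
                · refine hw.trans' Γ (Relation.ReflTransGen.single ?_)
                  exact ⟨p, c, d, c₃ ++ r, hc, by simp, by simp⟩

/-- Left cancellation for shuffle equivalence. -/
lemma lcancel {x : Ltr ι} {v v' : List (Ltr ι)} (h : Star Γ (x :: v) (x :: v')) :
    Star Γ v v' := by
  obtain ⟨q, r, he, hq, hw⟩ := ext1 Γ h
  cases q with
  | nil =>
      cases he; simpa using hw
  | cons e q₁ =>
      exfalso
      have he1 : e = x := by cases he; rfl
      subst he1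
      exact lcomm_irrefl Γ e (hq e (by simp))

/-- `w` admits a hidden cancellation. -/
def HCw (w : List (Ltr ι)) : Prop :=
  ∃ p z s, Star Γ w (p ++ z :: linv z :: s)

/-- `w` is a reduced word. -/
def RedW (w : List (Ltr ι)) : Prop := ¬ HCw Γ w

lemma hcw_of_star {w w' : List (Ltr ι)} (h : Star Γ w w') (h' : HCw Γ w') : HCw Γ w := by
  obtain ⟨p, z, s, hz⟩ := h'
  exact ⟨p, z, s, h.trans' Γ hz⟩

lemma redw_star {w w' : List (Ltr ι)} (h : Star Γ w w') (h' : RedW Γ w) : RedW Γ w' :=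
  fun hc => h' (hcw_of_star Γ h hc)

lemma hcw_cons (x : Ltr ι) {w : List (Ltr ι)} (h : HCw Γ w) : HCw Γ (x :: w) := by
  obtain ⟨p, z, s, hz⟩ := h
  exact ⟨x :: p, z, s, by simpa using star_cons Γ x hz⟩

lemma redw_of_cons {x : Ltr ι} {w : List (Ltr ι)} (h : RedW Γ (x :: w)) : RedW Γ w :=
  fun hc => h (hcw_cons Γ x hc)

lemma redw_nil : RedW Γ ([] : List (Ltr ι)) := by
  rintro ⟨p, z, s, hz⟩
  have := hz.length_eq Γ
  simp at this

/-- If `x :: w` has a hidden cancellation then either `w` does, or `linv x` can be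
moved to the front of `w`. -/
lemma hcw_cons_elim {x : Ltr ι} {w : List (Ltr ι)} (h : HCw Γ (x :: w)) :
    HCw Γ w ∨ ∃ v, Star Γ w (linv x :: v) := by
  obtain ⟨p, z, s, hz⟩ := h
  obtain ⟨q, r, he, hq, hw⟩ := ext1 Γ hz
  rcases List.append_eq_append_iff.1 he with ⟨a', ha1, ha2⟩ | ⟨c', hc1, hc2⟩
  · -- q = p ++ a', z :: linv z :: s = a' ++ x :: r
    cases a' with
    | nil =>
        simp only [List.nil_append] at ha2
        simp only [List.append_nil] at ha1
        cases ha2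
        subst ha1
        right
        refine ⟨q ++ s, hw.trans' Γ ?_⟩
        exact star_move Γ (a := linv x) s (fun y hy => hq y hy)
    | cons e a'' =>
        cases a'' with
        | nil =>
            simp only [List.cons_append, List.nil_append] at ha2
            cases ha2
            exfalso
            have hz2 : z ∈ q := by rw [ha1]; simp
            exact lcomm_irrefl Γ z (lcomm_symm Γ (hq z hz2))
        | cons f a₃ =>
            simp only [List.cons_append] at ha2
            cases ha2
            subst ha1
            left
            refine ⟨p, z, a₃ ++ r, ?_⟩
            refine hw.trans' Γ ?_
            simp only [List.append_assoc, List.cons_append]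
            exact Star.refl' Γ _
  · -- p = q ++ c', c' ++ z :: linv z :: s = x :: r
    cases c' with
    | nil =>
        simp only [List.nil_append] at hc2
        simp only [List.append_nil] at hc1
        cases hc2
        subst hc1
        right
        refine ⟨p ++ s, hw.trans' Γ ?_⟩
        exact star_move Γ (a := linv x) s (fun y hy => hq y hy)
    | cons e c'' =>
        simp only [List.cons_append] at hc2
        cases hc2
        subst hc1
        left
        refine ⟨q ++ c'', z, s, ?_⟩
        refine hw.trans' Γ ?_
        simp only [List.append_assoc, List.cons_append]
        exact Star.refl' Γ _

lemma redw_cons {x : Ltr ι} {w : List (Ltr ι)} (hw : RedW Γ w)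
    (hnd : ¬ ∃ v, Star Γ w (linv x :: v)) : RedW Γ (x :: w) := by
  intro hc
  rcases hcw_cons_elim Γ hc with h | h
  · exact hw h
  · exact hnd h

end RaagAux
namespace RaagAux

variable {ι : Type} (Γ : SimpleGraph ι)

/-- Reduced words. -/
def Rw := {w : List (Ltr ι) // RedW Γ w}

def rwSetoid : Setoid (Rw Γ) :=
  ⟨fun w w' => Star Γ w.1 w'.1,
   ⟨fun w => Star.refl' Γ _, fun h => h.symm' Γ, fun h h' => h.trans' Γ h'⟩⟩

/-- Normal forms: reduced words up to shuffle. -/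
def NS := Quotient (rwSetoid Γ)

/-- `a` can be moved to the front of `w`. -/
def Dm (a : Ltr ι) (w : List (Ltr ι)) : Prop := ∃ v, Star Γ w (a :: v)

lemma dm_of_star {a : Ltr ι} {w w' : List (Ltr ι)} (h : Star Γ w w') (h' : Dm Γ a w') :
    Dm Γ a w := by
  obtain ⟨v, hv⟩ := h'
  exact ⟨v, h.trans' Γ hv⟩

open Classical in
/-- The action of a letter on a reduced word. -/
noncomputable def actW (x : Ltr ι) (w : Rw Γ) : Rw Γ :=
  if h : Dm Γ (linv x) w.1 then
    ⟨h.choose, redw_of_cons Γ (redw_star Γ h.choose_spec w.2)⟩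
  else ⟨x :: w.1, redw_cons Γ w.2 h⟩

lemma actW_spec_pos {x : Ltr ι} {w : Rw Γ} (h : Dm Γ (linv x) w.1) :
    Star Γ w.1 (linv x :: (actW Γ x w).1) := by
  classical
  unfold actW
  erw [dif_pos h]
  exact h.choose_spec

lemma actW_neg {x : Ltr ι} {w : Rw Γ} (h : ¬ Dm Γ (linv x) w.1) :
    (actW Γ x w).1 = x :: w.1 := by
  classical
  unfold actW
  erw [dif_neg h]

/-- The action descends to normal forms. -/
noncomputable def A (x : Ltr ι) : NS Γ → NS Γ :=
  Quotient.map' (actW Γ x) (by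
    intro w w' hww
    change Star Γ w.1 w'.1 at hww
    change Star Γ _ _
    by_cases h : Dm Γ (linv x) w.1
    · have h' : Dm Γ (linv x) w'.1 := dm_of_star Γ (hww.symm' Γ) h
      have s1 := actW_spec_pos Γ h
      have s2 := actW_spec_pos Γ h'
      exact lcancel Γ (((s1.symm' Γ).trans' Γ hww).trans' Γ s2)
    · have h' : ¬ Dm Γ (linv x) w'.1 := fun hc => h (dm_of_star Γ hww hc)
      rw [actW_neg Γ h, actW_neg Γ h']
      exact star_cons Γ x hww)

lemma A_mk (x : Ltr ι) (w : Rw Γ) :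
    A Γ x (Quotient.mk'' w) = Quotient.mk'' (actW Γ x w) := rfl

lemma sound' {w w' : Rw Γ} (h : Star Γ w.1 w'.1) :
    (Quotient.mk'' w : NS Γ) = Quotient.mk'' w' := Quotient.sound' h

lemma A_inv_cancel (x : Ltr ι) (s : NS Γ) : A Γ x (A Γ (linv x) s) = s := by
  induction s using Quotient.inductionOn'
  rename_i w
  rw [A_mk, A_mk]
  by_cases h : Dm Γ (linv (linv x)) w.1
  · -- the `linv x` action deleted an `x`
    have s1 := actW_spec_pos Γ h
    rw [linv_linv] at s1
    set w₁ := actW Γ (linv x) w with hw₁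
    have hnd : ¬ Dm Γ (linv x) w₁.1 := by
      rintro ⟨v', hv'⟩
      apply w.2
      refine ⟨[], x, v', ?_⟩
      simpa using s1.trans' Γ (star_cons Γ x hv')
    apply sound'
    rw [actW_neg Γ hnd]
    exact (s1.trans' Γ (Star.refl' Γ _)).symm' Γ
  · have hne := actW_neg Γ h
    have hd : Dm Γ (linv x) (actW Γ (linv x) w).1 := by
      rw [hne]; exact ⟨w.1, Star.refl' Γ _⟩
    have s2 := actW_spec_pos Γ hd
    rw [hne] at s2
    apply sound'
    exact (lcancel Γ s2).symm' Γ

/-- The action of a letter, as a permutation of normal forms. -/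
noncomputable def permL (x : Ltr ι) : Equiv.Perm (NS Γ) where
  toFun := A Γ x
  invFun := A Γ (linv x)
  left_inv := fun s => by
    have := A_inv_cancel Γ (linv x) s
    rwa [linv_linv] at this
  right_inv := fun s => A_inv_cancel Γ x s

lemma permL_linv (x : Ltr ι) : permL Γ (linv x) = (permL Γ x)⁻¹ := by
  ext s
  rfl

/-- Mixed case of the commutation relation. -/
lemma acomm_mixed {x y : Ltr ι} (hc : lcomm Γ x y) (w : Rw Γ)
    (hy : Dm Γ (linv y) w.1) (hx : ¬ Dm Γ (linv x) w.1) :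
    A Γ x (A Γ y (Quotient.mk'' w)) = A Γ y (A Γ x (Quotient.mk'' w)) := by
  have sy := actW_spec_pos Γ hy
  have hxvy : ¬ Dm Γ (linv x) (actW Γ y w).1 := by
    rintro ⟨v₁, hv₁⟩
    apply hx
    refine ⟨linv y :: v₁, ?_⟩
    refine (sy.trans' Γ (star_cons Γ _ hv₁)).trans' Γ ?_
    exact Relation.ReflTransGen.single ⟨[], linv y, linv x, v₁, by
      simpa using lcomm_symm Γ hc, rfl, rfl⟩
  have hdy : Dm Γ (linv y) (actW Γ x w).1 := by
    rw [actW_neg Γ hx]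
    refine ⟨x :: (actW Γ y w).1, ?_⟩
    refine (star_cons Γ x sy).trans' Γ ?_
    exact Relation.ReflTransGen.single ⟨[], x, linv y, (actW Γ y w).1, by simpa using hc, rfl, rfl⟩
  have sy2 := actW_spec_pos Γ hdy
  rw [A_mk, A_mk, A_mk, A_mk]
  apply sound'
  have e1 : (actW Γ x (actW Γ y w)).1 = x :: (actW Γ y w).1 := actW_neg Γ hxvy
  rw [e1]
  have hbig : Star Γ ((actW Γ x w).1) (linv y :: x :: (actW Γ y w).1) := by
    rw [actW_neg Γ hx]
    refine (star_cons Γ x sy).trans' Γ ?_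
    exact Relation.ReflTransGen.single ⟨[], x, linv y, (actW Γ y w).1, by simpa using hc, rfl, rfl⟩
  exact (lcancel Γ ((sy2.symm' Γ).trans' Γ hbig)).symm' Γ

lemma acomm {x y : Ltr ι} (hc : lcomm Γ x y) (s : NS Γ) :
    A Γ x (A Γ y s) = A Γ y (A Γ x s) := by
  induction s using Quotient.inductionOn'
  rename_i w
  by_cases hy : Dm Γ (linv y) w.1 <;> by_cases hx : Dm Γ (linv x) w.1
  · -- both decrease
    have sy := actW_spec_pos Γ hy
    have sx := actW_spec_pos Γ hx
    have hstar : Star Γ (linv y :: (actW Γ y w).1) (linv x :: (actW Γ x w).1) :=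
      (sy.symm' Γ).trans' Γ sx
    obtain ⟨q, r, he, hq, hvr⟩ := ext1 Γ hstar
    cases q with
    | nil =>
        exfalso
        have h0 : linv x = linv y ∧ (actW Γ x w).1 = r := by
          rw [List.nil_append] at he
          exact ⟨(List.cons.injEq _ _ _ _ ▸ he).1, (List.cons.injEq _ _ _ _ ▸ he).2⟩
        apply lcomm_ne_fst Γ hc
        have := congrArg Prod.fst h0.1
        simpa using this
    | cons e q₁ =>
        have h0 : linv x = e ∧ (actW Γ x w).1 = q₁ ++ linv y :: r := by
          rw [List.cons_append] at he
          exact ⟨(List.cons.injEq _ _ _ _ ▸ he).1, (List.cons.injEq _ _ _ _ ▸ he).2⟩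
        obtain ⟨he1, hvx⟩ := h0
        have hq₁ : ∀ z ∈ q₁, lcomm Γ (linv y) z := fun z hz => hq z (by simp [hz])
        have hvr' : Star Γ (actW Γ y w).1 (linv x :: (q₁ ++ r)) := by
          rw [he1]; simpa using hvr
        have hdx : Dm Γ (linv x) (actW Γ y w).1 := ⟨q₁ ++ r, hvr'⟩
        have s3 := actW_spec_pos Γ hdx
        have l1 : Star Γ (actW Γ x (actW Γ y w)).1 (q₁ ++ r) := by
          exact lcancel Γ ((s3.symm' Γ).trans' Γ hvr')
        have hdy : Dm Γ (linv y) (actW Γ x w).1 := by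
          refine ⟨q₁ ++ r, ?_⟩
          rw [hvx]
          exact star_move Γ (a := linv y) r hq₁
        have s4 := actW_spec_pos Γ hdy
        have l2 : Star Γ (actW Γ y (actW Γ x w)).1 (q₁ ++ r) := by
          refine lcancel Γ ((s4.symm' Γ).trans' Γ ?_)
          rw [hvx]
          exact star_move Γ (a := linv y) r hq₁
        rw [A_mk, A_mk, A_mk, A_mk]
        apply sound'
        exact l1.trans' Γ (l2.symm' Γ)
  · exact acomm_mixed Γ hc w hy hx
  · exact (acomm_mixed Γ (lcomm_symm Γ hc) w hx hy).symm
  · -- both increase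
    have hnx := actW_neg Γ hx
    have hny := actW_neg Γ hy
    have key : ∀ (a b : Ltr ι), lcomm Γ a b → ¬ Dm Γ (linv a) w.1 →
        ¬ Dm Γ (linv a) (b :: w.1) := by
      intro a b hab ha
      rintro ⟨v, hv⟩
      obtain ⟨q, r, he, hq, hw'⟩ := ext1 Γ hv
      cases q with
      | nil =>
          rw [List.nil_append] at he
          have h0 : linv a = b := (List.cons.injEq _ _ _ _ ▸ he).1
          apply lcomm_ne_fst Γ hab
          have := congrArg Prod.fst h0
          simpa using this
      | cons e q₁ =>
          rw [List.cons_append] at he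
          have h0 : linv a = e ∧ v = q₁ ++ b :: r :=
            ⟨(List.cons.injEq _ _ _ _ ▸ he).1, (List.cons.injEq _ _ _ _ ▸ he).2⟩
          refine ha ⟨q₁ ++ r, ?_⟩
          rw [h0.1]
          simpa using hw'
    have h1 : ¬ Dm Γ (linv x) (actW Γ y w).1 := by
      rw [hny]; exact key x y hc hx
    have h2 : ¬ Dm Γ (linv y) (actW Γ x w).1 := by
      rw [hnx]; exact key y x (lcomm_symm Γ hc) hy
    rw [A_mk, A_mk, A_mk, A_mk]
    apply sound'
    rw [actW_neg Γ h1, actW_neg Γ h2, hnx, hny]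
    exact Relation.ReflTransGen.single ⟨[], x, y, w.1, hc, rfl, rfl⟩

end RaagAux
namespace RaagAux

variable {ι : Type} (Γ : SimpleGraph ι)

/-- The group element determined by a letter. -/
def ofL (x : Ltr ι) : Raag Γ := cond x.2 (rgen Γ x.1) (rgen Γ x.1)⁻¹

lemma ofL_linv (x : Ltr ι) : ofL Γ (linv x) = (ofL Γ x)⁻¹ := by
  rcases x with ⟨i, b⟩
  cases b <;> simp [ofL, linv]

lemma rgen_comm {i j : ι} (hadj : Γ.Adj i j) : Commute (rgen Γ i) (rgen Γ j) := by
  have h1 : (PresentedGroup.mk (raagRels Γ))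
      (FreeGroup.of i * FreeGroup.of j * (FreeGroup.of i)⁻¹ * (FreeGroup.of j)⁻¹) = 1 := by
    rw [PresentedGroup.mk_eq_one_iff]
    exact Subgroup.subset_normalClosure ⟨i, j, hadj, rfl⟩
  rw [map_mul, map_mul, map_inv, map_inv] at h1
  have h2 : rgen Γ i * rgen Γ j * (rgen Γ i)⁻¹ * (rgen Γ j)⁻¹ = 1 := h1
  rw [← commutatorElement_def] at h2
  exact commutatorElement_eq_one_iff_commute.1 h2

lemma ofL_comm {x y : Ltr ι} (h : lcomm Γ x y) : Commute (ofL Γ x) (ofL Γ y) := by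
  have hbase : Commute (rgen Γ x.1) (rgen Γ y.1) := rgen_comm Γ h
  rcases x with ⟨i, b⟩; rcases y with ⟨j, b'⟩
  cases b <;> cases b' <;>
    simp only [ofL, cond_true, cond_false] <;>
    first
      | exact hbase
      | exact hbase.inv_left
      | exact hbase.inv_right
      | exact hbase.inv_left.inv_right

/-- Evaluation of words. -/
def evalW (w : List (Ltr ι)) : Raag Γ := (w.map (ofL Γ)).prod

@[simp] lemma evalW_nil : evalW Γ ([] : List (Ltr ι)) = 1 := rfl

@[simp] lemma evalW_cons (x : Ltr ι) (w : List (Ltr ι)) :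
    evalW Γ (x :: w) = ofL Γ x * evalW Γ w := by simp [evalW]

@[simp] lemma evalW_append (u v : List (Ltr ι)) :
    evalW Γ (u ++ v) = evalW Γ u * evalW Γ v := by simp [evalW]

lemma evalW_star {w w' : List (Ltr ι)} (h : Star Γ w w') : evalW Γ w = evalW Γ w' := by
  induction h with
  | refl => rfl
  | tail _ hs ih =>
      obtain ⟨p, x, y, s, hc, h1, h2⟩ := hs
      rw [ih, h1, h2]
      simp only [evalW_append, evalW_cons]
      rw [← mul_assoc, ← mul_assoc, ← mul_assoc, ← mul_assoc,
        mul_assoc (evalW Γ p), (ofL_comm Γ hc).eq, ← mul_assoc]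

/-- The permutation action of the RAAG on normal forms. -/
noncomputable def permHom : Raag Γ →* Equiv.Perm (NS Γ) :=
  PresentedGroup.toGroup (f := fun i => permL Γ (i, true)) (by
    rintro r ⟨i, j, hadj, rfl⟩
    simp only [map_mul, map_inv, FreeGroup.lift_apply_of]
    rw [← commutatorElement_def]
    rw [commutatorElement_eq_one_iff_commute]
    change Commute (permL Γ (i, true)) (permL Γ (j, true))
    refine Equiv.ext fun s => ?_
    simp only [Equiv.Perm.mul_apply]
    exact acomm Γ (show lcomm Γ (i, true) (j, true) from hadj) s)

lemma permHom_rgen (i : ι) : permHom Γ (rgen Γ i) = permL Γ (i, true) :=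
  PresentedGroup.toGroup.of _

lemma permHom_ofL (x : Ltr ι) : permHom Γ (ofL Γ x) = permL Γ x := by
  rcases x with ⟨i, b⟩
  cases b
  · show permHom Γ (rgen Γ i)⁻¹ = permL Γ (i, false)
    rw [map_inv, permHom_rgen]
    exact (permL_linv Γ (i, true)).symm
  · simpa [ofL] using permHom_rgen Γ i

/-- The empty normal form. -/
def ptNS : NS Γ := Quotient.mk'' ⟨[], redw_nil Γ⟩

/-- The normal form of a group element. -/
noncomputable def nf (g : Raag Γ) : NS Γ := permHom Γ g (ptNS Γ)

/-- Length of a normal form. -/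
def lenNS : NS Γ → ℕ := fun s =>
  Quotient.liftOn' s (fun w => w.1.length) (fun _ _ h => Star.length_eq Γ h)

/-- Word length in the RAAG. -/
noncomputable def len (g : Raag Γ) : ℕ := lenNS Γ (nf Γ g)

lemma lenNS_mk (w : Rw Γ) : lenNS Γ (Quotient.mk'' w) = w.1.length := rfl

lemma nf_one : nf Γ 1 = ptNS Γ := by simp [nf]

lemma len_one : len Γ 1 = 0 := by
  rw [len, nf_one]
  rfl

lemma nf_mul_ofL (x : Ltr ι) (g : Raag Γ) : nf Γ (ofL Γ x * g) = A Γ x (nf Γ g) := by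
  rw [nf, map_mul, Equiv.Perm.mul_apply, permHom_ofL]
  rfl

/-- Characterisation: left multiplication by a letter decreases length iff the
inverse letter moves to the front of the normal form. -/
lemma len_lt_iff {x : Ltr ι} {g : Raag Γ} {w : Rw Γ} (hw : nf Γ g = Quotient.mk'' w) :
    len Γ (ofL Γ x * g) < len Γ g ↔ Dm Γ (linv x) w.1 := by
  rw [len, len, nf_mul_ofL, hw, A_mk, lenNS_mk, lenNS_mk]
  by_cases h : Dm Γ (linv x) w.1
  · have := (actW_spec_pos Γ h).length_eq Γ
    simp only [List.length_cons] at this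
    constructor
    · intro _; exact h
    · intro _; omega
  · rw [actW_neg Γ h]
    simp only [List.length_cons]
    constructor
    · intro hlt; omega
    · intro hd; exact absurd hd h
  
lemma len_step (x : Ltr ι) (g : Raag Γ) :
    len Γ (ofL Γ x * g) + 1 = len Γ g ∨ len Γ (ofL Γ x * g) = len Γ g + 1 := by
  obtain ⟨w, hw⟩ := Quotient.exists_rep (nf Γ g)
  have hw' : nf Γ g = Quotient.mk'' w := hw.symm
  rw [len, len, nf_mul_ofL, hw', A_mk, lenNS_mk, lenNS_mk]
  by_cases h : Dm Γ (linv x) w.1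
  · left
    have := (actW_spec_pos Γ h).length_eq Γ
    simp only [List.length_cons] at this
    omega
  · right
    rw [actW_neg Γ h]
    simp

/-- Evaluation of normal forms. -/
noncomputable def evalNS : NS Γ → Raag Γ := fun s =>
  Quotient.liftOn' s (fun w => evalW Γ w.1) (fun _ _ h => evalW_star Γ h)

lemma evalNS_mk (w : Rw Γ) : evalNS Γ (Quotient.mk'' w) = evalW Γ w.1 := rfl

lemma evalNS_A (x : Ltr ι) (s : NS Γ) : evalNS Γ (A Γ x s) = ofL Γ x * evalNS Γ s := by
  induction s using Quotient.inductionOn'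
  rename_i w
  rw [A_mk, evalNS_mk, evalNS_mk]
  by_cases h : Dm Γ (linv x) w.1
  · have hs := evalW_star Γ (actW_spec_pos Γ h)
    rw [hs, evalW_cons, ofL_linv, ← mul_assoc, mul_inv_cancel, one_mul]
  · rw [actW_neg Γ h, evalW_cons]

lemma mem_closure_range (g : Raag Γ) : g ∈ Subgroup.closure (Set.range (rgen Γ)) := by
  have h : Set.range (rgen Γ) = Set.range (PresentedGroup.of (rels := raagRels Γ)) := rfl
  rw [h, PresentedGroup.closure_range_of]
  trivial

lemma evalNS_permHom (g : Raag Γ) (s : NS Γ) :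
    evalNS Γ (permHom Γ g s) = g * evalNS Γ s := by
  have hmem := mem_closure_range Γ g
  induction hmem using Subgroup.closure_induction generalizing s with
  | mem y hy =>
      obtain ⟨i, rfl⟩ := hy
      rw [permHom_rgen]
      have : (permL Γ (i, true)) s = A Γ (i, true) s := rfl
      rw [this, evalNS_A]
      rfl
  | one => simp
  | mul y z _ _ hy hz =>
      rw [map_mul, Equiv.Perm.mul_apply, hy, hz, mul_assoc]
  | inv y _ hy =>
      have := hy ((permHom Γ y⁻¹) s)
      rw [← Equiv.Perm.mul_apply, ← map_mul, mul_inv_cancel, map_one] at this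
      simp only [Equiv.Perm.one_apply] at this
      rw [this, ← mul_assoc, inv_mul_cancel, one_mul]

lemma evalNS_nf (g : Raag Γ) : evalNS Γ (nf Γ g) = g := by
  rw [nf, evalNS_permHom]
  have : evalNS Γ (ptNS Γ) = 1 := rfl
  rw [this, mul_one]

lemma len_evalW_le (w : List (Ltr ι)) : len Γ (evalW Γ w) ≤ w.length := by
  induction w with
  | nil => simp [len_one]
  | cons x w ih =>
      rw [evalW_cons]
      rcases len_step Γ x (evalW Γ w) with h | h <;> simp only [List.length_cons] <;> omega

/-- Inverse-reverse of a word. -/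
def rinv (w : List (Ltr ι)) : List (Ltr ι) := (w.map linv).reverse

@[simp] lemma rinv_append (u v : List (Ltr ι)) :
    rinv (u ++ v) = rinv v ++ rinv u := by simp [rinv]

@[simp] lemma rinv_cons (x : Ltr ι) (w : List (Ltr ι)) :
    rinv (x :: w) = rinv w ++ [linv x] := by simp [rinv]

@[simp] lemma rinv_rinv (w : List (Ltr ι)) : rinv (rinv w) = w := by
  simp only [rinv, List.map_reverse, List.reverse_reverse, List.map_map]
  have : linv ∘ (linv : Ltr ι → Ltr ι) = id := funext fun x => linv_linv x
  rw [this, List.map_id]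

lemma evalW_rinv (w : List (Ltr ι)) : evalW Γ (rinv w) = (evalW Γ w)⁻¹ := by
  induction w with
  | nil => simp [rinv]
  | cons x w ih => rw [rinv_cons, evalW_append, evalW_cons, ih]; simp [ofL_linv]

lemma len_nf (g : Raag Γ) {w : Rw Γ} (hw : nf Γ g = Quotient.mk'' w) :
    len Γ g = w.1.length := by rw [len, hw, lenNS_mk]

lemma evalW_nf (g : Raag Γ) {w : Rw Γ} (hw : nf Γ g = Quotient.mk'' w) :
    evalW Γ w.1 = g := by
  rw [← evalNS_mk, ← hw, evalNS_nf]

lemma len_inv (g : Raag Γ) : len Γ g⁻¹ = len Γ g := by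
  have key : ∀ h : Raag Γ, len Γ h⁻¹ ≤ len Γ h := by
    intro h
    obtain ⟨w, hw⟩ := Quotient.exists_rep (nf Γ h)
    have h1 : evalW Γ (rinv w.1) = h⁻¹ := by
      rw [evalW_rinv, evalW_nf Γ h hw.symm]
    calc len Γ h⁻¹ = len Γ (evalW Γ (rinv w.1)) := by rw [h1]
      _ ≤ (rinv w.1).length := len_evalW_le Γ _
      _ = w.1.length := by simp [rinv]
      _ = len Γ h := (len_nf Γ h hw.symm).symm
  exact le_antisymm (key g) (by simpa using key g⁻¹)

lemma sw_rinv {w w' : List (Ltr ι)} (h : Sw Γ w w') : Sw Γ (rinv w) (rinv w') := by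
  obtain ⟨p, x, y, s, hc, h1, h2⟩ := h
  refine ⟨rinv s, linv y, linv x, rinv p, ?_, ?_, ?_⟩
  · exact lcomm_symm Γ hc
  · rw [h1]; simp
  · rw [h2]; simp

lemma star_rinv {w w' : List (Ltr ι)} (h : Star Γ w w') : Star Γ (rinv w) (rinv w') :=
  Relation.ReflTransGen.lift rinv (fun _ _ hs => sw_rinv Γ hs) _ _ h

lemma redw_rinv {w : List (Ltr ι)} (h : RedW Γ w) : RedW Γ (rinv w) := by
  rintro ⟨p, z, s, hz⟩
  apply h
  have h1 := star_rinv Γ hz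
  rw [rinv_rinv] at h1
  refine ⟨rinv s, z, rinv p, ?_⟩
  have h2 : rinv (p ++ z :: linv z :: s) = rinv s ++ z :: linv z :: rinv p := by
    simp
  rwa [h2] at h1

/-- Uniqueness of the normal form: any reduced word represents its own class. -/
lemma nf_evalW {w : List (Ltr ι)} (hw : RedW Γ w) :
    nf Γ (evalW Γ w) = Quotient.mk'' ⟨w, hw⟩ := by
  induction w with
  | nil => rw [evalW_nil, nf_one]; rfl
  | cons x w ih =>
      have hw' : RedW Γ w := redw_of_cons Γ hw
      rw [evalW_cons, nf_mul_ofL, ih hw']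
      show Quotient.mk'' (actW Γ x ⟨w, hw'⟩) = _
      have hnd : ¬ Dm Γ (linv x) w := by
        rintro ⟨v, hv⟩
        exact hw ⟨[], x, v, by simpa using star_cons Γ x hv⟩
      apply congrArg
      apply Subtype.ext
      exact actW_neg Γ hnd

lemma nf_inv (g : Raag Γ) {w : Rw Γ} (hw : nf Γ g = Quotient.mk'' w) :
    nf Γ g⁻¹ = Quotient.mk'' ⟨rinv w.1, redw_rinv Γ w.2⟩ := by
  have h1 : evalW Γ (rinv w.1) = g⁻¹ := by
    rw [evalW_rinv, evalW_nf Γ g hw]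
  rw [← h1, nf_evalW Γ (redw_rinv Γ w.2)]


end RaagAux
namespace RaagAux

variable {ι : Type} (Γ : SimpleGraph ι)

lemma linv_ne (x : Ltr ι) : linv x ≠ x := by
  rcases x with ⟨i, b⟩
  cases b <;> simp [linv]

lemma mem_rinv {y : Ltr ι} {w : List (Ltr ι)} : y ∈ rinv w ↔ ∃ z ∈ w, y = linv z := by
  simp only [rinv, List.mem_reverse, List.mem_map]
  constructor
  · rintro ⟨z, hz, rfl⟩; exact ⟨z, hz, rfl⟩
  · rintro ⟨z, hz, rfl⟩; exact ⟨z, hz, rfl⟩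

/-- Left-decrement characterisation via a decomposition of the normal form. -/
lemma len_lt_decomp {x : Ltr ι} {g : Raag Γ} {w : Rw Γ} (hw : nf Γ g = Quotient.mk'' w) :
    len Γ (ofL Γ x * g) < len Γ g ↔
      ∃ s t, w.1 = s ++ linv x :: t ∧ ∀ y ∈ s, lcomm Γ x y := by
  rw [len_lt_iff Γ hw]
  constructor
  · rintro ⟨v, hv⟩
    obtain ⟨q, r, he, hq, _⟩ := ext1 Γ (hv.symm' Γ)
    exact ⟨q, r, he, fun y hy => hq y hy⟩
  · rintro ⟨s, t, he, hs⟩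
    refine ⟨s ++ t, ?_⟩
    rw [he]
    exact star_move Γ (a := linv x) t (fun y hy => hs y hy)

/-- Right-decrement characterisation via a decomposition of the normal form. -/
lemma len_rt_decomp {b : Ltr ι} {g : Raag Γ} {w : Rw Γ} (hw : nf Γ g = Quotient.mk'' w) :
    len Γ (g * ofL Γ b) < len Γ g ↔
      ∃ s t, w.1 = s ++ linv b :: t ∧ ∀ y ∈ t, lcomm Γ b y := by
  have h1 : len Γ (g * ofL Γ b) = len Γ (ofL Γ (linv b) * g⁻¹) := by
    rw [← len_inv]
    congr 1
    rw [mul_inv_rev, ofL_linv]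
  have h2 : len Γ g = len Γ g⁻¹ := (len_inv Γ g).symm
  rw [h1, h2, len_lt_iff Γ (nf_inv Γ g hw), linv_linv]
  constructor
  · rintro ⟨v, hv⟩
    obtain ⟨q, r, he, hq, _⟩ := ext1 Γ (hv.symm' Γ)
    refine ⟨rinv r, rinv q, ?_, ?_⟩
    · have := congrArg rinv he
      rw [rinv_rinv] at this
      rw [this]
      simp
    · intro y hy
      obtain ⟨z, hz, rfl⟩ := mem_rinv.1 hy
      exact hq z hz
  · rintro ⟨s, t, he, hs⟩
    refine ⟨rinv t ++ rinv s, ?_⟩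
    have h3 : rinv w.1 = rinv t ++ b :: rinv s := by
      rw [he]; simp
    have h4 : Star Γ (rinv t ++ b :: rinv s) (b :: (rinv t ++ rinv s)) := by
      refine star_move Γ (a := b) (rinv s) ?_
      intro y hy
      obtain ⟨z, hz, rfl⟩ := mem_rinv.1 hy
      exact hs z hz
    show Star Γ (rinv w.1) _
    rw [h3]
    exact h4

/-- A geodesic word cannot be shortened on the right by both a letter and its
inverse: no local maxima. -/
lemma no_local_max (g : Raag Γ) (x : Ltr ι) :
    ¬ (len Γ (g * ofL Γ x) < len Γ g ∧ len Γ (g * ofL Γ (linv x)) < len Γ g) := by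
  rintro ⟨h1, h2⟩
  obtain ⟨w, hw⟩ := Quotient.exists_rep (nf Γ g)
  have hw' : nf Γ g = Quotient.mk'' w := hw.symm
  rw [len_rt_decomp Γ hw'] at h1 h2
  obtain ⟨s₁, t₁, he₁, ht₁⟩ := h1
  obtain ⟨s₂, t₂, he₂, ht₂⟩ := h2
  rw [linv_linv] at he₂
  have hco : ∀ y ∈ t₂, lcomm Γ x y := fun y hy => ht₂ y hy
  have he : s₁ ++ linv x :: t₁ = s₂ ++ x :: t₂ := he₁ ▸ he₂
  rcases List.append_eq_append_iff.1 he with ⟨a', ha1, ha2⟩ | ⟨c', hc1, hc2⟩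
  · cases a' with
    | nil =>
        rw [List.nil_append] at ha2
        have : linv x = x := (List.cons.injEq _ _ _ _ ▸ ha2).1
        exact linv_ne x this
    | cons e a'' =>
        rw [List.cons_append] at ha2
        have h3 : t₁ = a'' ++ x :: t₂ := (List.cons.injEq _ _ _ _ ▸ ha2).2
        have : x ∈ t₁ := by rw [h3]; simp
        exact lcomm_irrefl Γ x (ht₁ x this)
  · cases c' with
    | nil =>
        rw [List.nil_append] at hc2
        have : x = linv x := (List.cons.injEq _ _ _ _ ▸ hc2).1
        exact linv_ne x this.symm
    | cons e c'' =>
        rw [List.cons_append] at hc2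
        have h3 : t₂ = c'' ++ linv x :: t₁ := (List.cons.injEq _ _ _ _ ▸ hc2).2
        have : linv x ∈ t₂ := by rw [h3]; simp
        have := hco _ this
        rw [lcomm_linv_right] at this
        exact lcomm_irrefl Γ x this

lemma len_step_right (g : Raag Γ) (x : Ltr ι) :
    len Γ (g * ofL Γ x) + 1 = len Γ g ∨ len Γ (g * ofL Γ x) = len Γ g + 1 := by
  have h1 : len Γ (g * ofL Γ x) = len Γ (ofL Γ (linv x) * g⁻¹) := by
    rw [← len_inv]
    congr 1
    rw [mul_inv_rev, ofL_linv]
  have h2 : len Γ g = len Γ g⁻¹ := (len_inv Γ g).symm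
  rw [h1, h2]
  exact len_step Γ (linv x) g⁻¹

/-- A ±1-step function on `ℤ` with no strict local maximum is a "tent". -/
lemma tentZ (f : ℤ → ℕ)
    (hstep : ∀ n, f (n + 1) + 1 = f n ∨ f (n + 1) = f n + 1)
    (hnomax : ∀ n, ¬ (f (n + 1) < f n ∧ f (n - 1) < f n)) :
    ∃ n₀, ∀ n, f n = f n₀ + (n - n₀).natAbs := by
  have hne : (Set.range f).Nonempty := ⟨f 0, 0, rfl⟩
  obtain ⟨n₀, hn₀⟩ := Nat.sInf_mem hne
  set c := sInf (Set.range f) with hc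
  have hmin : ∀ n, c ≤ f n := fun n => Nat.sInf_le ⟨n, rfl⟩
  refine ⟨n₀, ?_⟩
  -- ascending propagates right
  have hA : ∀ n, f n ≤ f (n + 1) → f (n + 1) ≤ f (n + 2) := by
    intro n hup
    by_contra hcon
    push_neg at hcon
    have hnm := hnomax (n + 1)
    push_neg at hnm
    have h4 : ¬ f (n + 1 - 1) < f (n + 1) := by
      intro hlt
      exact absurd hlt (by
        have := hnm (by
          have : n + 1 + 1 = n + 2 := by ring
          rw [this]; exact hcon)
        simpa using this)
    have h5 : f (n + 1) ≤ f n := by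
      have : n + 1 - 1 = n := by ring
      rw [this] at h4
      omega
    rcases hstep n with h | h <;> omega
  -- descending propagates left
  have hB : ∀ n, f (n + 1) < f n → f n < f (n - 1) := by
    intro n hdown
    by_contra hcon
    push_neg at hcon
    have := hA (n - 1) (by
      have h6 : n - 1 + 1 = n := by ring
      rw [h6]; exact hcon)
    have h6 : n - 1 + 1 = n := by ring
    have h7 : n - 1 + 2 = n + 1 := by ring
    rw [h6, h7] at this
    omega
  -- values one step from the minimum
  have hup1 : ∀ n, f n = c → f (n + 1) = c + 1 := by
    intro n hfn
    rcases hstep n with h | h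
    · have := hmin (n + 1); omega
    · omega
  have hdown1 : ∀ n, f n = c → f (n - 1) = c + 1 := by
    intro n hfn
    have h8 : n - 1 + 1 = n := by ring
    have := hstep (n - 1)
    rw [h8] at this
    have := hmin (n - 1)
    omega
  have hright : ∀ k : ℕ, f (n₀ + k) = c + k ∧ f (n₀ + k + 1) = c + k + 1 := by
    intro k
    induction k with
    | zero =>
        refine ⟨by simpa using hn₀, ?_⟩
        simpa using hup1 n₀ hn₀
    | succ m ih =>
        have hcast : ((m + 1 : ℕ) : ℤ) = (m : ℤ) + 1 := by push_cast; ring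
        have h1 : f (n₀ + m) ≤ f (n₀ + m + 1) := by omega
        have h2 := hA (n₀ + m) h1
        have h3 := hstep (n₀ + m + 1)
        have e1 : n₀ + (m : ℤ) + 2 = n₀ + (m : ℤ) + 1 + 1 := by ring
        rw [e1] at h2
        constructor
        · rw [hcast, ← add_assoc]
          omega
        · rw [hcast, ← add_assoc]
          push_cast
          omega
  have hleft : ∀ k : ℕ, f (n₀ - k) = c + k ∧ f (n₀ - k - 1) = c + k + 1 := by
    intro k
    induction k with
    | zero =>
        refine ⟨by simpa using hn₀, ?_⟩
        simpa using hdown1 n₀ hn₀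
    | succ m ih =>
        have hcast : ((m + 1 : ℕ) : ℤ) = (m : ℤ) + 1 := by push_cast; ring
        have hdesc : f ((n₀ - m - 1) + 1) < f (n₀ - m - 1) := by
          have e1 : n₀ - (m : ℤ) - 1 + 1 = n₀ - m := by ring
          rw [e1]
          omega
        have h2 := hB (n₀ - m - 1) hdesc
        have h3 := hstep (n₀ - m - 1 - 1)
        have e2 : n₀ - (m : ℤ) - 1 - 1 + 1 = n₀ - m - 1 := by ring
        rw [e2] at h3
        constructor
        · rw [hcast]
          have e3 : n₀ - ((m : ℤ) + 1) = n₀ - m - 1 := by ring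
          rw [e3]
          omega
        · rw [hcast]
          have e3 : n₀ - ((m : ℤ) + 1) - 1 = n₀ - m - 1 - 1 := by ring
          rw [e3]
          push_cast
          omega
  intro n
  rcases le_or_gt n₀ n with hle | hlt
  · have hk : n = n₀ + ((n - n₀).toNat : ℤ) := by omega
    have := (hright (n - n₀).toNat).1
    rw [← hk] at this
    rw [this, hn₀]
    congr 1
    omega
  · have hk : n = n₀ - ((n₀ - n).toNat : ℤ) := by omega
    have := (hleft (n₀ - n).toNat).1
    rw [← hk] at this
    rw [this, hn₀]
    congr 1
    omega

end RaagAux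
namespace RaagAux

variable {ι : Type} (Γ : SimpleGraph ι)

lemma linv_inj {a b : Ltr ι} (h : linv a = linv b) : a = b := by
  have := congrArg linv h
  rwa [linv_linv, linv_linv] at this

/-- The strip lemma: if deleting a letter on the left and a letter on the right
each shorten `r`, but doing both does not shorten it twice, then the two
deletions coincide. -/
lemma strip {a b : Ltr ι} {r : Raag Γ} {c : ℕ}
    (hr : len Γ r = c + 1)
    (h1 : len Γ (ofL Γ a * r) = c)
    (h2 : len Γ (r * ofL Γ b) = c)
    (h3 : len Γ (ofL Γ a * r * ofL Γ b) = c + 1) :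
    ofL Γ a * r = r * ofL Γ b := by
  obtain ⟨w, hw0⟩ := Quotient.exists_rep (nf Γ r)
  have hw : nf Γ r = Quotient.mk'' w := hw0.symm
  have hlen : w.1.length = c + 1 := by rw [← len_nf Γ r hw]; exact hr
  have hev : evalW Γ w.1 = r := evalW_nf Γ r hw
  obtain ⟨s, t, heL, hsL⟩ := (len_lt_decomp Γ hw).1 (by rw [h1, hr]; omega)
  obtain ⟨s', t', heR, htR⟩ := (len_rt_decomp Γ hw).1 (by rw [h2, hr]; omega)
  -- evaluate after the left deletion
  have eL : ofL Γ a * r = evalW Γ (s ++ t) := by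
    have hst : Star Γ w.1 (linv a :: (s ++ t)) := by
      rw [heL]; exact star_move Γ (a := linv a) t (fun y hy => hsL y hy)
    have := evalW_star Γ hst
    rw [hev] at this
    rw [this, evalW_cons, ofL_linv, ← mul_assoc, mul_inv_cancel, one_mul]
  -- evaluate after the right deletion
  have eR : r * ofL Γ b = evalW Γ (s' ++ t') := by
    have h4 : Star Γ (t' ++ [b]) (b :: t') := by
      have := star_move Γ (q := t') (a := b) [] (fun y hy => htR y hy)
      simpa using this
    have h5 : Star Γ (w.1 ++ [b]) (s' ++ linv b :: b :: t') := by
      rw [heR]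
      have h6 : (s' ++ linv b :: t') ++ [b] = (s' ++ [linv b]) ++ (t' ++ [b]) := by simp
      have h7 : s' ++ linv b :: b :: t' = (s' ++ [linv b]) ++ (b :: t') := by simp
      rw [h6, h7]
      exact star_append_left Γ (s' ++ [linv b]) h4
    have := evalW_star Γ h5
    rw [evalW_append, hev] at this
    rw [show evalW Γ [b] = ofL Γ b by simp] at this
    rw [this]
    simp only [evalW_append, evalW_cons]
    rw [ofL_linv]
    group
  have he : s ++ linv a :: t = s' ++ linv b :: t' := heL ▸ heR
  rcases List.append_eq_append_iff.1 he with ⟨a', ha1, ha2⟩ | ⟨c', hc1, hc2⟩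
  · cases a' with
    | nil =>
        rw [List.nil_append] at ha2
        rw [List.append_nil] at ha1
        have hab : linv a = linv b := (List.cons.injEq _ _ _ _ ▸ ha2).1
        have htt : t = t' := (List.cons.injEq _ _ _ _ ▸ ha2).2
        rw [eL, eR, ← ha1, htt]
    | cons e a'' =>
        exfalso
        rw [List.cons_append] at ha2
        have h8 : linv a = e ∧ t = a'' ++ linv b :: t' := by
          exact ⟨(List.cons.injEq _ _ _ _ ▸ ha2).1, (List.cons.injEq _ _ _ _ ▸ ha2).2⟩
        obtain ⟨h8a, h8b⟩ := h8
        -- (ofL a * r) * ofL b = evalW ((s ++ a'') ++ t')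
        have e2 : ofL Γ a * r * ofL Γ b = evalW Γ ((s ++ a'') ++ t') := by
          rw [eL, h8b]
          rw [show s ++ (a'' ++ linv b :: t') = s ++ a'' ++ linv b :: t' from by simp]
          have h9 : Star Γ ((s ++ a'' ++ linv b :: t') ++ [b]) ((s ++ a'') ++ (linv b :: b :: t')) := by
            have h6 : (s ++ a'' ++ linv b :: t') ++ [b] = ((s ++ a'') ++ [linv b]) ++ (t' ++ [b]) := by
              simp
            have h7 : (s ++ a'') ++ (linv b :: b :: t') = ((s ++ a'') ++ [linv b]) ++ (b :: t') := by
              simp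
            rw [h6, h7]
            refine star_append_left Γ _ ?_
            have := star_move Γ (q := t') (a := b) [] (fun y hy => htR y hy)
            simpa using this
          have h10 := evalW_star Γ h9
          have h11 : evalW Γ (s ++ (a'' ++ linv b :: t')) * ofL Γ b
              = evalW Γ ((s ++ a'' ++ linv b :: t') ++ [b]) := by
            simp [evalW_append, mul_assoc]
          rw [← List.append_assoc] at h11
          rw [h11, h10]
          simp only [evalW_append, evalW_cons, ofL_linv]
          group
        have hle := len_evalW_le Γ ((s ++ a'') ++ t')
        rw [← e2] at hle
        have hlens : s.length + 1 + (a''.length + 1 + t'.length) = c + 1 := by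
          have := congrArg List.length heL
          rw [h8b] at this
          simp at this
          omega
        rw [h3] at hle
        simp only [List.length_append] at hle
        omega
  · cases c' with
    | nil =>
        rw [List.nil_append] at hc2
        rw [List.append_nil] at hc1
        have hab : linv b = linv a := (List.cons.injEq _ _ _ _ ▸ hc2).1
        have htt : t' = t := by
          have := (List.cons.injEq _ _ _ _ ▸ hc2).2
          exact this
        rw [eL, eR, hc1, htt]
    | cons e c'' =>
        exfalso
        rw [List.cons_append] at hc2
        have h8 : linv b = e ∧ t' = c'' ++ linv a :: t := by
          refine ⟨(List.cons.injEq _ _ _ _ ▸ hc2).1, ?_⟩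
          have := (List.cons.injEq _ _ _ _ ▸ hc2).2
          exact this
        obtain ⟨h8a, h8b⟩ := h8
        have hmem : ∀ y ∈ s' ++ c'', lcomm Γ a y := by
          intro y hy
          apply hsL y
          rw [hc1, ← h8a]
          rcases List.mem_append.1 hy with hy | hy
          · exact List.mem_append_left _ hy
          · exact List.mem_append_right _ (by simp [hy])
        have e2 : ofL Γ a * (r * ofL Γ b) = evalW Γ ((s' ++ c'') ++ t) := by
          rw [eR, h8b]
          have h9 : Star Γ (s' ++ (c'' ++ linv a :: t)) (linv a :: ((s' ++ c'') ++ t)) := by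
            have h6 : s' ++ (c'' ++ linv a :: t) = (s' ++ c'') ++ linv a :: t := by simp
            rw [h6]
            exact star_move Γ (a := linv a) t hmem
          have h10 := evalW_star Γ h9
          rw [h10]
          simp only [evalW_cons, ofL_linv]
          group
        rw [← mul_assoc] at e2
        have hle := len_evalW_le Γ ((s' ++ c'') ++ t)
        rw [← e2, h3] at hle
        have hlens : s'.length + 1 + (c''.length + 1 + t.length) = c + 1 := by
          have := congrArg List.length heR
          rw [h8b] at this
          simp at this
          omega
        simp only [List.length_append] at hle
        omega

end RaagAux
namespace RaagAux

variable {ι : Type} (Γ : SimpleGraph ι)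

lemma len_ofL (x : Ltr ι) : len Γ (ofL Γ x) = 1 := by
  have h := len_step Γ x 1
  rw [mul_one, len_one] at h
  omega

lemma ofL_ne_one (x : Ltr ι) : ofL Γ x ≠ 1 := by
  intro h
  have := len_ofL Γ x
  rw [h, len_one] at this
  omega

lemma adj_mul_ofL (g : Raag Γ) (x : Ltr ι) : (cayley Γ).Adj g (g * ofL Γ x) := by
  refine ⟨?_, ?_⟩
  · intro h
    exact ofL_ne_one Γ x (by
      have h2 := h.symm
      calc ofL Γ x = g⁻¹ * (g * ofL Γ x) := by group
        _ = g⁻¹ * g := by rw [h2]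
        _ = 1 := by group)
  · refine ⟨x.1, ?_⟩
    rcases x with ⟨i, b⟩
    cases b
    · right
      show g = g * ofL Γ (i, false) * rgen Γ i
      simp [ofL]
    · left
      rfl

lemma walk_exists (w : List (Ltr ι)) (z : Raag Γ) :
    ∃ p : (cayley Γ).Walk z (z * evalW Γ w), p.length = w.length := by
  induction w generalizing z with
  | nil =>
      exact ⟨(SimpleGraph.Walk.nil' z).copy rfl (by simp), by rw [SimpleGraph.Walk.length_copy]; rfl⟩
  | cons x w ih =>
      obtain ⟨p, hp⟩ := ih (z * ofL Γ x)
      refine ⟨((SimpleGraph.Walk.cons (adj_mul_ofL Γ z x) p).copy rfl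
        (by rw [evalW_cons, ← mul_assoc])), ?_⟩
      simp [hp]

lemma len_le_walk {g h' : Raag Γ} (p : (cayley Γ).Walk g h') :
    len Γ (g⁻¹ * h') ≤ p.length := by
  induction p with
  | nil => simp [len_one]
  | cons hadj p ih =>
      rename_i u v w'
      obtain ⟨hne, i, hi | hi⟩ := hadj
      · have h1 : u⁻¹ * w' = ofL Γ (i, true) * (v⁻¹ * w') := by
          rw [hi]
          show _ = rgen Γ i * _
          group
        rw [h1]
        have := len_step Γ (i, true) (v⁻¹ * w')
        show _ ≤ p.length + 1
        omega
      · have h1 : u⁻¹ * w' = ofL Γ (i, false) * (v⁻¹ * w') := by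
          rw [hi]
          show _ = (rgen Γ i)⁻¹ * _
          group
        rw [h1]
        have := len_step Γ (i, false) (v⁻¹ * w')
        show _ ≤ p.length + 1
        omega

lemma cayley_dist (g h' : Raag Γ) : (cayley Γ).dist g h' = len Γ (g⁻¹ * h') := by
  obtain ⟨w, hw0⟩ := Quotient.exists_rep (nf Γ (g⁻¹ * h'))
  have hw : nf Γ (g⁻¹ * h') = Quotient.mk'' w := hw0.symm
  obtain ⟨p, hp⟩ := walk_exists Γ w.1 g
  have hev : g * evalW Γ w.1 = h' := by
    rw [evalW_nf Γ _ hw]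
    group
  have hlen : w.1.length = len Γ (g⁻¹ * h') := (len_nf Γ _ hw).symm
  have hle : (cayley Γ).dist g h' ≤ len Γ (g⁻¹ * h') := by
    have := SimpleGraph.dist_le (p.copy rfl hev)
    rwa [SimpleGraph.Walk.length_copy, hp, hlen] at this
  have hreach : (cayley Γ).Reachable g h' := ⟨p.copy rfl hev⟩
  obtain ⟨q, hq⟩ := hreach.exists_walk_length_eq_dist
  have hge := len_le_walk Γ q
  rw [hq] at hge
  omega

end RaagAux
namespace RaagAux

variable {ι : Type} (Γ : SimpleGraph ι)

/-- Distance profile of `z` along the standard geodesic through `h` in direction `i`. -/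
noncomputable def fZ (h : Raag Γ) (i : ι) (z : Raag Γ) (n : ℤ) : ℕ :=
  len Γ (z⁻¹ * h * rgen Γ i ^ n)

lemma fZ_succ (h : Raag Γ) (i : ι) (z : Raag Γ) (n : ℤ) :
    fZ Γ h i z (n + 1) = len Γ ((z⁻¹ * h * rgen Γ i ^ n) * ofL Γ (i, true)) := by
  rw [fZ, zpow_add_one, ← mul_assoc]
  rfl

lemma fZ_pred (h : Raag Γ) (i : ι) (z : Raag Γ) (n : ℤ) :
    fZ Γ h i z (n - 1) = len Γ ((z⁻¹ * h * rgen Γ i ^ n) * ofL Γ (i, false)) := by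
  rw [fZ, zpow_sub_one, ← mul_assoc]
  rfl

lemma fZ_tent (h : Raag Γ) (i : ι) (z : Raag Γ) :
    ∃ n₀, ∀ n, fZ Γ h i z n = fZ Γ h i z n₀ + (n - n₀).natAbs := by
  apply tentZ
  · intro n
    rw [fZ_succ]
    have := len_step_right Γ (z⁻¹ * h * rgen Γ i ^ n) ((i, true) : Ltr ι)
    rcases this with hh | hh
    · left; rw [hh]; rfl
    · right; rw [hh]; rfl
  · intro n
    rw [fZ_succ, fZ_pred]
    have h1 := no_local_max Γ (z⁻¹ * h * rgen Γ i ^ n) ((i, true) : Ltr ι)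
    have h2 : linv ((i, true) : Ltr ι) = (i, false) := rfl
    rw [h2] at h1
    intro hcon
    refine h1 ⟨?_, ?_⟩
    · rw [fZ] at hcon; exact hcon.1
    · rw [fZ] at hcon; exact hcon.2

/-- The projection height of `z` onto the standard geodesic. -/
noncomputable def apex (h : Raag Γ) (i : ι) (z : Raag Γ) : ℤ :=
  (fZ_tent Γ h i z).choose

lemma apex_spec (h : Raag Γ) (i : ι) (z : Raag Γ) (n : ℤ) :
    fZ Γ h i z n = fZ Γ h i z (apex Γ h i z) + (n - apex Γ h i z).natAbs :=
  (fZ_tent Γ h i z).choose_spec n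

lemma dist_eq_fZ (h : Raag Γ) (i : ι) (z : Raag Γ) (m : ℤ) :
    (cayley Γ).dist z (h * rgen Γ i ^ m) = fZ Γ h i z m := by
  rw [cayley_dist, fZ, mul_assoc]

/-- Each vertex has a unique nearest point on each standard geodesic. -/
lemma nearest_pt (h : Raag Γ) (i : ι) (z : Raag Γ) :
    NearestPt (cayley Γ) (stdGeod Γ h i) z (h * rgen Γ i ^ apex Γ h i z) := by
  refine ⟨⟨apex Γ h i z, rfl⟩, ?_⟩
  rintro w ⟨m, rfl⟩ hne
  rw [dist_eq_fZ, dist_eq_fZ]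
  have h1 := apex_spec Γ h i z m
  have h3 : (m - apex Γ h i z).natAbs ≠ 0 := by
    intro hc
    exact hne (by rw [show m = apex Γ h i z from by omega])
  omega

lemma setDist_eq {V : Type} (G : SimpleGraph V) (x : V) (B : Set V) (c : ℕ)
    (h1 : ∃ b ∈ B, G.dist x b = c) (h2 : ∀ b ∈ B, c ≤ G.dist x b) :
    setDistN G x B = c := by
  obtain ⟨b, hb, hbe⟩ := h1
  apply le_antisymm
  · exact Nat.sInf_le ⟨b, hb, hbe⟩
  · refine le_csInf ⟨G.dist x b, b, hb, rfl⟩ ?_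
    rintro v ⟨b', hb', rfl⟩
    exact h2 b' hb'

/-- The edge lemma: if an edge of the Cayley graph changes the projection onto a
standard geodesic, then the standard geodesic through that edge is parallel to it. -/
lemma edge_step (h : Raag Γ) (i : ι) (z : Raag Γ) (y : Ltr ι)
    (hne : apex Γ h i (z * ofL Γ y) ≠ apex Γ h i z) :
    ParSets (cayley Γ) (stdGeod Γ z y.1) (stdGeod Γ h i) := by
  set z' := z * ofL Γ y with hz'
  set a := apex Γ h i z with ha
  set n₁ := apex Γ h i z' with hn₁
  set c := fZ Γ h i z a with hc
  set c' := fZ Γ h i z' n₁ with hc'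
  have hdd : ∀ n, fZ Γ h i z' n + 1 = fZ Γ h i z n ∨ fZ Γ h i z' n = fZ Γ h i z n + 1 := by
    intro n
    have he : z'⁻¹ * h * rgen Γ i ^ n = ofL Γ (linv y) * (z⁻¹ * h * rgen Γ i ^ n) := by
      rw [hz', mul_inv_rev, ofL_linv]
      group
    rw [fZ, fZ, he]
    exact len_step Γ (linv y) _
  have hta := apex_spec Γ h i z
  have htn := apex_spec Γ h i z'
  simp only [← ha] at hta
  simp only [← hn₁] at htn
  have hD1 : (n₁ - a).natAbs = 1 ∧ c' = c := by
    have e1 := hdd a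
    have e2 := hdd n₁
    rw [htn a, ← hc'] at e1
    rw [hta n₁, ← hc] at e2
    rw [← hc] at e1
    rw [← hc'] at e2
    have hDpos : (n₁ - a).natAbs ≠ 0 := fun hcon => hne (by omega)
    omega
  set d := n₁ - a with hd
  have hd2 : d * d = 1 := by
    have h5 := hD1.1
    have : d = 1 ∨ d = -1 := by omega
    rcases this with h6 | h6 <;> rw [h6] <;> norm_num
  set r := z⁻¹ * h * rgen Γ i ^ n₁ with hr
  have hlr : len Γ r = c + 1 := by
    rw [hr, ← fZ, hta n₁, ← hc, ← hd, hD1.1]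
  set bm : Ltr ι := if d = 1 then (i, false) else (i, true) with hbm
  have hofbm : ofL Γ bm = rgen Γ i ^ (-d) := by
    have h5 := hD1.1
    have hdor : d = 1 ∨ d = -1 := by omega
    rcases hdor with h5 | h5 <;> rw [hbm, h5] <;> simp [ofL]
  have hstrip : ofL Γ (linv y) * r = r * ofL Γ bm := by
    apply strip Γ hlr
    · have he : ofL Γ (linv y) * r = z'⁻¹ * h * rgen Γ i ^ n₁ := by
        rw [hz', mul_inv_rev, ofL_linv, hr]
        group
      rw [he, ← fZ, ← hc', hD1.2]
    · have he : r * ofL Γ bm = z⁻¹ * h * rgen Γ i ^ a := by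
        rw [hofbm, hr, mul_assoc, ← zpow_add]
        congr 2
        rw [hd]; ring
      rw [he, ← fZ, ← hc]
    · have he : ofL Γ (linv y) * r * ofL Γ bm = z'⁻¹ * h * rgen Γ i ^ a := by
        rw [hofbm, hz', mul_inv_rev, ofL_linv, hr]
        rw [mul_assoc _ _ (rgen Γ i ^ (-d)), mul_assoc _ _ (rgen Γ i ^ (-d)), ← zpow_add]
        rw [show n₁ + -d = a from by rw [hd]; ring]
        group
      rw [he, ← fZ, htn a, ← hc', hD1.2]
      have h6 : (a - n₁).natAbs = 1 := by omega
      omega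
  -- conjugation relation
  have h7 : r = ofL Γ y * (r * ofL Γ bm) := by
    rw [← hstrip, ofL_linv]
    group
  have h8 : r * (ofL Γ bm)⁻¹ = ofL Γ y * r := by
    nth_rewrite 1 [h7]
    group
  have hkey : ofL Γ y * r = r * rgen Γ i ^ d := by
    rw [← h8, hofbm, zpow_neg, inv_inv]
  have hconj : ∀ s : ℤ, (ofL Γ y) ^ s * r = r * rgen Γ i ^ (d * s) := by
    have hy : ofL Γ y = r * rgen Γ i ^ d * r⁻¹ := by rw [← hkey]; group
    have hcz : ∀ s : ℤ, (r * rgen Γ i ^ d * r⁻¹) ^ s = r * rgen Γ i ^ (d * s) * r⁻¹ := by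
      intro s
      induction s using Int.induction_on with
      | zero => simp
      | succ n ih =>
          rw [zpow_add_one, ih, show d * (n + 1) = d * n + d from by ring, zpow_add]
          group
      | pred n ih =>
          rw [zpow_sub_one, ih, show d * (-(n : ℤ) - 1) = d * (-(n : ℤ)) - d from by ring,
            zpow_sub _ (d * -(n : ℤ)) d]
          group
    intro s
    rw [hy, hcz s]
    group
  -- sign of the letter y
  set ε : ℤ := if y.2 then 1 else -1 with hε
  have hε2 : ε * ε = 1 := by
    rcases y with ⟨j, b⟩
    cases b <;> simp [hε]
  have hpow : ∀ k : ℤ, rgen Γ y.1 ^ k = (ofL Γ y) ^ (ε * k) := by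
    intro k
    rcases y with ⟨j, b⟩
    cases b
    · show rgen Γ j ^ k = ((rgen Γ j)⁻¹ : Raag Γ) ^ (ε * k)
      rw [inv_zpow, ← zpow_neg]
      congr 1
      simp [hε]
    · show rgen Γ j ^ k = (rgen Γ j : Raag Γ) ^ (ε * k)
      congr 1
      simp [hε]
  -- the distance formula between the two geodesics
  have distform : ∀ k m : ℤ, (cayley Γ).dist (z * rgen Γ y.1 ^ k) (h * rgen Γ i ^ m)
      = c + (m + d * (ε * (-k)) - a).natAbs := by
    intro k m
    rw [cayley_dist]
    have h9 : (rgen Γ y.1 ^ k)⁻¹ = (ofL Γ y) ^ (ε * (-k)) := by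
      rw [← zpow_neg, hpow (-k)]
    have h11 : r * rgen Γ i ^ (m - n₁) = z⁻¹ * h * rgen Γ i ^ m := by
      rw [hr, mul_assoc (z⁻¹ * h), ← zpow_add]
      congr 2
      ring
    have h13 : r * rgen Γ i ^ (d * (ε * -k) + (m - n₁))
        = z⁻¹ * h * rgen Γ i ^ (m + d * (ε * (-k))) := by
      rw [hr, mul_assoc (z⁻¹ * h), ← zpow_add]
      congr 2
      ring
    have h10 : (ofL Γ y) ^ (ε * (-k)) * (z⁻¹ * h * rgen Γ i ^ m)
        = z⁻¹ * h * rgen Γ i ^ (m + d * (ε * (-k))) := by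
      rw [← h11, ← mul_assoc, hconj (ε * (-k)), mul_assoc, ← zpow_add, h13]
    have h12 : (z * rgen Γ y.1 ^ k)⁻¹ * (h * rgen Γ i ^ m)
        = (rgen Γ y.1 ^ k)⁻¹ * (z⁻¹ * h * rgen Γ i ^ m) := by group
    rw [h12, h9, h10, ← fZ, hta _, ← hc]
  -- conclusion: the two geodesics are parallel at distance `c`
  refine ⟨⟨z, 0, by simp⟩, ⟨h, 0, by simp⟩, c, ?_, ?_⟩
  · rintro p ⟨k, rfl⟩
    apply setDist_eq
    · refine ⟨h * rgen Γ i ^ (a - d * (ε * (-k))), ⟨_, rfl⟩, ?_⟩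
      rw [distform]
      rw [show a - d * (ε * -k) + d * (ε * -k) - a = 0 from by ring]
      simp
    · rintro b ⟨m, rfl⟩
      rw [distform]
      omega
  · rintro b ⟨m, rfl⟩
    apply setDist_eq
    · refine ⟨z * rgen Γ y.1 ^ (ε * d * (m - a)), ⟨_, rfl⟩, ?_⟩
      rw [SimpleGraph.dist_comm, distform]
      have e : m + d * (ε * (-(ε * d * (m - a)))) - a
          = m + -((d * d) * ((ε * ε) * (m - a))) - a := by ring
      rw [e, hd2, hε2]
      rw [show m + -(1 * (1 * (m - a))) - a = 0 from by ring]
      simp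
    · rintro p ⟨k, rfl⟩
      rw [SimpleGraph.dist_comm, distform]
      omega

end RaagAux

open RaagAux in
/-- Let `K ⊂ X(Γ)` be a standard subcomplex (a coset `g₀·G(Λ)` of a
standard subgroup, at the level of 0-skeleta) and let `v = Δ(l)` be a vertex of
the extension complex `𝒫(Γ)`, represented by the standard geodesic `l`.  If
`v ∉ Δ(K)`, i.e. no standard geodesic contained in `K` is parallel to `l`, then
the 0-skeleton of `K` is contained in a single `v`-level. -/
theorem stmt13 {ι : Type} [Finite ι] (Γ : SimpleGraph ι)
    (g₀ : Raag Γ) (Λ : Set ι) (h : Raag Γ) (i : ι)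
    (K : Set (Raag Γ))
    (hK : K = (fun x => g₀ * x) '' (Subgroup.closure (rgen Γ '' Λ) : Set (Raag Γ)))
    (hnot : ∀ l'' : Set (Raag Γ), IsStdGeod Γ l'' → l'' ⊆ K →
      ¬ ParSets (cayley Γ) l'' (stdGeod Γ h i)) :
    ∃ x ∈ stdGeod Γ h i, ∀ z ∈ K, NearestPt (cayley Γ) (stdGeod Γ h i) z x := by
  classical
  -- every element of the standard subgroup is represented by a word in `Λ`-letters
  have hword : ∀ s ∈ Subgroup.closure (rgen Γ '' Λ), ∃ w : List (Ltr ι),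
      (∀ y ∈ w, y.1 ∈ Λ) ∧ evalW Γ w = s := by
    intro s hs
    induction hs using Subgroup.closure_induction with
    | mem t ht =>
        obtain ⟨j, hj, rfl⟩ := ht
        refine ⟨[(j, true)], by simp [hj], ?_⟩
        simp [evalW, ofL]
    | one => exact ⟨[], by simp, rfl⟩
    | mul a b _ _ ha hb =>
        obtain ⟨wa, hwa, hea⟩ := ha
        obtain ⟨wb, hwb, heb⟩ := hb
        refine ⟨wa ++ wb, ?_, by rw [evalW_append, hea, heb]⟩
        intro y hy
        rcases List.mem_append.1 hy with hy | hy
        · exact hwa y hy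
        · exact hwb y hy
    | inv a _ ha =>
        obtain ⟨wa, hwa, hea⟩ := ha
        refine ⟨rinv wa, ?_, by rw [evalW_rinv, hea]⟩
        intro y hy
        obtain ⟨t, ht, rfl⟩ := mem_rinv.1 hy
        exact hwa t ht
  -- words in `Λ`-letters evaluate into the standard subgroup
  have hmemW : ∀ w : List (Ltr ι), (∀ y ∈ w, y.1 ∈ Λ) →
      evalW Γ w ∈ Subgroup.closure (rgen Γ '' Λ) := by
    intro w
    induction w with
    | nil => intro _; simp only [evalW_nil]; exact one_mem _
    | cons x w ih =>
        intro hmem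
        rw [evalW_cons]
        refine mul_mem ?_ (ih fun y hy => hmem y (by simp [hy]))
        have hx : rgen Γ x.1 ∈ Subgroup.closure (rgen Γ '' Λ) :=
          Subgroup.subset_closure ⟨x.1, hmem x (by simp), rfl⟩
        rcases x with ⟨j, b⟩
        cases b
        · exact inv_mem hx
        · exact hx
  -- the projection height is constant on `K`
  have main : ∀ w : List (Ltr ι), (∀ y ∈ w, y.1 ∈ Λ) →
      apex Γ h i (g₀ * evalW Γ w) = apex Γ h i g₀ := by
    intro w
    induction w using List.reverseRecOn with
    | nil => intro _; simp
    | append_singleton w y ih =>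
        intro hmem
        have hmw : ∀ t ∈ w, t.1 ∈ Λ := fun t ht => hmem t (by simp [ht])
        have hyΛ : y.1 ∈ Λ := hmem y (by simp)
        have hz : g₀ * evalW Γ (w ++ [y]) = (g₀ * evalW Γ w) * ofL Γ y := by
          rw [evalW_append, evalW_cons, evalW_nil, mul_one, mul_assoc]
        rw [hz]
        by_cases hcase : apex Γ h i ((g₀ * evalW Γ w) * ofL Γ y) = apex Γ h i (g₀ * evalW Γ w)
        · rw [hcase, ih hmw]
        · exfalso
          have hpar := edge_step Γ h i (g₀ * evalW Γ w) y hcase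
          refine hnot (stdGeod Γ (g₀ * evalW Γ w) y.1) ⟨_, _, rfl⟩ ?_ hpar
          rintro p ⟨n, rfl⟩
          rw [hK]
          refine ⟨evalW Γ w * rgen Γ y.1 ^ n, ?_, by group⟩
          exact mul_mem (hmemW w hmw)
            (zpow_mem (Subgroup.subset_closure
              (show rgen Γ y.1 ∈ rgen Γ '' Λ from ⟨y.1, hyΛ, rfl⟩)) n)
  refine ⟨h * rgen Γ i ^ apex Γ h i g₀, ⟨_, rfl⟩, ?_⟩
  intro z hz
  have hzap : apex Γ h i z = apex Γ h i g₀ := by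
    rw [hK] at hz
    obtain ⟨s, hs, hzs⟩ := hz
    obtain ⟨w, hwΛ, hws⟩ := hword s hs
    have : z = g₀ * evalW Γ w := by rw [hws]; exact hzs.symm
    rw [this]
    exact main w hwΛ
  have := nearest_pt Γ h i z
  rwa [hzap] at this
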